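/- Let n, k ∈ ℕ with 2k ≥ n − 1. Then the map (Q, P) ↦ Q Pᵀ − P Qᵀ from pairs of real n × k matrices onto the real n × n skew-symmetric matrices is surjective: every real n × n matrix W with Wᵀ = −W can be written as W = Q Pᵀ − P Qᵀ for some real n × k matrices Q, P. -/

import Mathlib

open Matrix

private lemma skew_aux (n : ℕ) : ∀ (k : ℕ) (W : Matrix (Fin n) (Fin n) ℝ), Wᵀ = -W →
    (Finset.univ.filter (fun i => ∃ a, W a i ≠ 0)).card ≤ 2 * k + 1 →
    ∃ Q P : Matrix (Fin n) (Fin k) ℝ, W = Q * Pᵀ - P * Qᵀ := by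
  intro k
  induction k with
  | zero =>
    intro W hW hcard
    classical
    have hWs : ∀ a b, W b a = -W a b := by
      intro a b
      have := congrFun (congrFun hW a) b
      simpa [Matrix.transpose_apply] using this
    have hdiag : ∀ x, W x x = 0 := by
      intro x; have := hWs x x; linarith
    have hW0 : W = 0 := by
      funext a b
      by_contra hab0
      have hab : W a b ≠ 0 := by simpa using hab0
      have hb : b ∈ Finset.univ.filter (fun i => ∃ a, W a i ≠ 0) := by
        simp only [Finset.mem_filter, Finset.mem_univ, true_and]
        exact ⟨a, hab⟩
      have ha : a ∈ Finset.univ.filter (fun i => ∃ a, W a i ≠ 0) := by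
        simp only [Finset.mem_filter, Finset.mem_univ, true_and]
        refine ⟨b, ?_⟩
        rw [hWs a b]
        simpa using hab
      have hne : a ≠ b := by
        intro h; subst h; exact hab (hdiag a)
      have : 1 < (Finset.univ.filter (fun i => ∃ a, W a i ≠ 0)).card :=
        Finset.one_lt_card.2 ⟨a, ha, b, hb, hne⟩
      omega
    exact ⟨0, 0, by simp [hW0]⟩
  | succ k ih =>
    intro W hW hcard
    classical
    have hWs : ∀ a b, W b a = -W a b := by
      intro a b
      have := congrFun (congrFun hW a) b
      simpa [Matrix.transpose_apply] using this
    have hdiag : ∀ x, W x x = 0 := by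
      intro x; have := hWs x x; linarith
    by_cases hW0 : W = 0
    · exact ⟨0, 0, by simp [hW0]⟩
    · have hpq : ∃ p q, W p q ≠ 0 := by
        by_contra h
        push_neg at h
        exact hW0 (by funext a b; exact h a b)
      obtain ⟨p, q, hc⟩ := hpq
      set c := W p q with hc_def
      have hpq_ne : p ≠ q := by
        intro h; subst h; exact hc (hdiag p)
      set W' : Matrix (Fin n) (Fin n) ℝ :=
        Matrix.of (fun a b => W a b - (1/c) * (W a p * W b q - W a q * W b p)) with hW'_def
      have hW'app : ∀ a b, W' a b = W a b - (1/c) * (W a p * W b q - W a q * W b p) :=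
        fun a b => rfl
      have hskew' : W'ᵀ = -W' := by
        funext a b
        simp only [Matrix.transpose_apply, Matrix.neg_apply, hW'app]
        rw [hWs a b]
        ring
      -- column p of W' is zero
      have hcolp : ∀ a, W' a p = 0 := by
        intro a
        rw [hW'app, hdiag p, show W p q = c from rfl]
        field_simp
        ring
      have hcolq : ∀ a, W' a q = 0 := by
        intro a
        have h2 : W q p = -c := hWs p q
        rw [hW'app, hdiag q, h2]
        field_simp
        ring
      -- zero columns stay zero
      have hzero : ∀ i, (∀ a, W a i = 0) → ∀ a, W' a i = 0 := by
        intro i hi a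
        rw [hW'app, hi a]
        have h1 : W i q = 0 := by rw [hWs q i, hi q, neg_zero]
        have h2 : W i p = 0 := by rw [hWs p i, hi p, neg_zero]
        rw [h1, h2]
        ring
      -- membership facts
      have hq_mem : q ∈ Finset.univ.filter (fun i => ∃ a, W a i ≠ 0) := by
        simp only [Finset.mem_filter, Finset.mem_univ, true_and]
        exact ⟨p, hc⟩
      have hp_mem : p ∈ Finset.univ.filter (fun i => ∃ a, W a i ≠ 0) := by
        simp only [Finset.mem_filter, Finset.mem_univ, true_and]
        refine ⟨q, ?_⟩
        rw [hWs p q]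
        simpa using hc
      have hsub : (Finset.univ.filter (fun i => ∃ a, W' a i ≠ 0)) ⊆
          ((Finset.univ.filter (fun i => ∃ a, W a i ≠ 0)).erase q).erase p := by
        intro i hi
        simp only [Finset.mem_filter, Finset.mem_univ, true_and] at hi
        obtain ⟨a, hai⟩ := hi
        have hip : i ≠ p := by
          intro h; subst h; exact hai (hcolp a)
        have hiq : i ≠ q := by
          intro h; subst h; exact hai (hcolq a)
        have hiW : ∃ b, W b i ≠ 0 := by
          by_contra h
          push_neg at h
          exact hai (hzero i h a)
        simp only [Finset.mem_erase, Finset.mem_filter, Finset.mem_univ, true_and]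
        exact ⟨hip, hiq, hiW⟩
      have hcard' : (Finset.univ.filter (fun i => ∃ a, W' a i ≠ 0)).card ≤ 2 * k + 1 := by
        have h1 := Finset.card_le_card hsub
        have hp_mem' : p ∈ (Finset.univ.filter (fun i => ∃ a, W a i ≠ 0)).erase q :=
          Finset.mem_erase.2 ⟨hpq_ne, hp_mem⟩
        rw [Finset.card_erase_of_mem hp_mem', Finset.card_erase_of_mem hq_mem] at h1
        omega
      obtain ⟨Q', P', hQP'⟩ := ih W' hskew' hcard'
      refine ⟨Matrix.of (fun a => Fin.snoc (Q' a) (W a p)),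
        Matrix.of (fun a => Fin.snoc (P' a) ((1/c) * W a q)), ?_⟩
      funext a b
      have h1 := congrFun (congrFun hQP' a) b
      simp only [Matrix.sub_apply, Matrix.mul_apply, Matrix.transpose_apply, hW'app] at h1 ⊢
      rw [Fin.sum_univ_castSucc, Fin.sum_univ_castSucc]
      simp only [Matrix.of_apply, Fin.snoc_castSucc, Fin.snoc_last]
      linear_combination h1

/-- If `2k ≥ n − 1`, every real skew-symmetric `n × n` matrix `W` can be written as
`W = Q Pᵀ − P Qᵀ` for some real `n × k` matrices `Q`, `P`; i.e. the momentum map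
`(Q, P) ↦ Q Pᵀ − P Qᵀ` onto the skew-symmetric matrices is surjective. -/
theorem skew_eq_QPt_sub_PQt_of_two_k_ge
    (n k : ℕ) (hk : 2 * k ≥ n - 1) (W : Matrix (Fin n) (Fin n) ℝ) (hW : Wᵀ = -W) :
    ∃ Q P : Matrix (Fin n) (Fin k) ℝ, W = Q * Pᵀ - P * Qᵀ := by
  classical
  apply skew_aux n k W hW
  calc (Finset.univ.filter (fun i => ∃ a, W a i ≠ 0)).card
      ≤ (Finset.univ : Finset (Fin n)).card := Finset.card_filter_le _ _
    _ = n := by simp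
    _ ≤ 2 * k + 1 := by omega
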